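/- Let c = 2^{ν(c)}·c₁ be an even positive integer with c₁ odd, and let n be a positive integer such that c | 2n and c₁ | n. Let U be a multisubset of C_n = ⟨x⟩ with all multiplicities at most 2. If χ(Ū) ≡ 0 (mod c) for all nonprincipal characters χ of C_n, then there exists a multisubset E of {0,1,...,2n/c − 1} with multiplicities at most 2 such that U = x^E·⟨x^{2n/c}⟩. -/

import Mathlib

open Polynomial

namespace StmtAux

/-- polynomial attached to an integer-valued function on `ZMod n` -/
noncomputable def polyOf (n : ℕ) [NeZero n] (f : ZMod n → ℤ) : ℤ[X] :=
  ∑ x : ZMod n, monomial x.val (f x)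

lemma natDegree_polyOf_lt {n : ℕ} [NeZero n] (f : ZMod n → ℤ) :
    (polyOf n f).natDegree < n := by
  have hn : 0 < n := Nat.pos_of_ne_zero (NeZero.ne n)
  have h : (polyOf n f).natDegree ≤ n - 1 := by
    refine natDegree_sum_le_of_forall_le _ _ fun x _ => ?_
    refine (natDegree_monomial_le _).trans ?_
    have := ZMod.val_lt x
    omega
  omega

lemma coeff_polyOf {n : ℕ} [NeZero n] (f : ZMod n → ℤ) (y : ZMod n) :
    (polyOf n f).coeff y.val = f y := by
  rw [polyOf, finset_sum_coeff, Finset.sum_eq_single y]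
  · simp [coeff_monomial]
  · intro b _ hb
    rw [coeff_monomial, if_neg]
    exact fun h => hb (ZMod.val_injective n h)
  · simp

lemma polyOf_map {n : ℕ} [NeZero n] {R : Type*} [Ring R] (f : ZMod n → ℤ) :
    (polyOf n f).map (Int.castRingHom R) = ∑ x : ZMod n, monomial x.val (((f x : ℤ) : R)) := by
  rw [polyOf, Polynomial.map_sum]
  refine Finset.sum_congr rfl fun x _ => ?_
  rw [map_monomial]
  norm_num

lemma aeval_polyOf {n : ℕ} [NeZero n] (f : ZMod n → ℤ) (θ : ℂ) :
    aeval θ (polyOf n f) = ∑ x : ZMod n, (f x : ℂ) * θ ^ x.val := by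
  rw [polyOf, map_sum]
  refine Finset.sum_congr rfl fun x _ => ?_
  rw [aeval_monomial]
  simp

lemma X_pow_sub_one_dvd_pow_sub_pow_mod {R : Type*} [CommRing R] (n a : ℕ) :
    (X ^ n - 1 : R[X]) ∣ X ^ a - X ^ (a % n) := by
  rcases Nat.eq_zero_or_pos n with rfl | hn
  · simp
  have h1 : (X : R[X]) ^ a = (X ^ n) ^ (a / n) * X ^ (a % n) := by
    rw [← pow_mul, ← pow_add, Nat.div_add_mod]
  have h2 : (X ^ n - 1 : R[X]) ∣ (X ^ n) ^ (a / n) - 1 := by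
    simpa using sub_dvd_pow_sub_pow (X ^ n : R[X]) 1 (a / n)
  have h3 : (X : R[X]) ^ a - X ^ (a % n) = ((X ^ n) ^ (a / n) - 1) * X ^ (a % n) := by
    rw [h1]; ring
  rw [h3]
  exact h2.mul_right _

lemma map_frobenius_id (p : ℕ) [Fact p.Prime] (Q : (ZMod p)[X]) :
    Q.map (frobenius (ZMod p) p) = Q := by
  ext i
  simp [coeff_map, frobenius_def, ZMod.pow_card]

lemma expand_zmod (p : ℕ) [Fact p.Prime] (Q : (ZMod p)[X]) :
    expand (ZMod p) p Q = Q ^ p := by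
  have h := Polynomial.map_frobenius_expand (p := p) Q
  rwa [map_frobenius_id] at h

lemma expand_pow_zmod (p : ℕ) [Fact p.Prime] (j : ℕ) (Q : (ZMod p)[X]) :
    expand (ZMod p) (p ^ j) Q = Q ^ (p ^ j) := by
  induction j with
  | zero => simp
  | succ j ih =>
      rw [pow_succ, ← expand_expand, expand_zmod, map_pow, ih, ← pow_mul]

lemma rootMultiplicity_pow {R : Type*} [CommRing R] [IsDomain R] {P : R[X]} (hP : P ≠ 0)
    (a : R) (k : ℕ) : rootMultiplicity a (P ^ k) = k * rootMultiplicity a P := by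
  induction k with
  | zero => simp [rootMultiplicity_eq_zero]
  | succ k ih =>
      rw [pow_succ, rootMultiplicity_mul (mul_ne_zero (pow_ne_zero _ hP) hP), ih]
      ring

lemma dvd_of_expand_dvd {K : Type*} [Field K] (p : ℕ) [CharP K p] (hp : p.Prime)
    (t E : ℕ) (ht : ¬ p ∣ t) (ht0 : 0 < t) (ξ : K) (hξ : ξ ≠ 0) (P : K[X]) (hP : P ≠ 0)
    (h : (X - C ξ) ^ E ∣ expand K t P) : (X - C (ξ ^ t)) ^ E ∣ P := by
  set m := rootMultiplicity (ξ ^ t) P with hm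
  have hdec : (X - C (ξ ^ t)) ^ m * (P /ₘ (X - C (ξ ^ t)) ^ m) = P :=
    pow_mul_divByMonic_rootMultiplicity_eq P (ξ ^ t)
  set S := P /ₘ (X - C (ξ ^ t)) ^ m with hS
  have hSev : S.eval (ξ ^ t) ≠ 0 := eval_divByMonic_pow_rootMultiplicity_ne_zero (ξ ^ t) hP
  have hexP : expand K t P ≠ 0 := by
    intro h0
    exact hP (expand_injective ht0 (by simpa using h0))
  have hexpand : expand K t P = (X ^ t - C (ξ ^ t)) ^ m * expand K t S := by
    conv_lhs => rw [← hdec]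
    rw [map_mul, map_pow, map_sub, expand_X, expand_C]
  have hsep : Separable (X ^ t - C (ξ ^ t)) :=
    separable_X_pow_sub_C' p t (ξ ^ t) ht (pow_ne_zero _ hξ)
  have hne : (X ^ t - C (ξ ^ t) : K[X]) ≠ 0 := by
    intro h0
    have h1 := natDegree_X_pow_sub_C (n := t) (r := ξ ^ t)
    rw [h0] at h1
    simp only [natDegree_zero] at h1
    omega
  have hroot1 : rootMultiplicity ξ (X ^ t - C (ξ ^ t)) = 1 := by
    have hle : rootMultiplicity ξ (X ^ t - C (ξ ^ t)) ≤ 1 :=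
      rootMultiplicity_le_one_of_separable hsep ξ
    have hge : 1 ≤ rootMultiplicity ξ (X ^ t - C (ξ ^ t)) := by
      rw [le_rootMultiplicity_iff hne, pow_one, dvd_iff_isRoot]
      simp [IsRoot]
    omega
  have hroot0 : rootMultiplicity ξ (expand K t S) = 0 := by
    refine rootMultiplicity_eq_zero ?_
    rw [IsRoot, expand_eval]
    exact hSev
  have hmul : rootMultiplicity ξ (expand K t P) = m := by
    rw [hexpand, rootMultiplicity_mul (by rw [← hexpand]; exact hexP),
      rootMultiplicity_pow hne, hroot1, hroot0]
    ring
  have hEm : E ≤ m := by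
    rw [← hmul]
    exact (le_rootMultiplicity_iff hexP).mpr h
  calc (X - C (ξ ^ t)) ^ E ∣ (X - C (ξ ^ t)) ^ m := pow_dvd_pow _ hEm
    _ ∣ P := by rw [← hdec]; exact Dvd.intro _ rfl

lemma expand_zmod' (p : ℕ) [Fact p.Prime] (Q : (ZMod p)[X]) :
    expand (ZMod p) p Q = Q ^ p := by
  have h := Polynomial.map_frobenius_expand (p := p) Q
  have hid : ∀ R : (ZMod p)[X], R.map (frobenius (ZMod p) p) = R := by
    intro R; ext i; simp [coeff_map, frobenius_def, ZMod.pow_card]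
  rw [hid] at h
  exact h

lemma expand_pow_zmod' (p : ℕ) [Fact p.Prime] (j : ℕ) (Q : (ZMod p)[X]) :
    expand (ZMod p) (p ^ j) Q = Q ^ (p ^ j) := by
  induction j with
  | zero => simp
  | succ j ih => rw [pow_succ, ← expand_expand, expand_zmod', map_pow, ih, ← pow_mul]

lemma pow_sub_pow_factor_eq {p α β : ℕ} (hp : 1 < p) (h1 : 1 ≤ α) (hab : α ≤ β) :
    p ^ β - p ^ (β - 1) = p ^ (β - α) * (p ^ α - p ^ (α - 1)) := by
  have h1' : p ^ (β - α) * p ^ α = p ^ β := by rw [← pow_add]; congr 1; omega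
  have h2' : p ^ (β - α) * p ^ (α - 1) = p ^ (β - 1) := by rw [← pow_add]; congr 1; omega
  have hba : p ^ (α - 1) ≤ p ^ α := Nat.pow_le_pow_right (by omega) (by omega)
  have h3 : p ^ (β - α) * p ^ α
      = p ^ (β - α) * p ^ (α - 1) + p ^ (β - α) * (p ^ α - p ^ (α - 1)) := by
    rw [← Nat.mul_add]; congr 1; omega
  omega

set_option maxHeartbeats 1000000 in
lemma core (p : ℕ) (hp : p.Prime) (N n : ℕ) (hN : 0 < N) (hn : 0 < n) (hnN : n ∣ N)
    (hpn : p ∣ n) (ζ : ℂ) (hζ : IsPrimitiveRoot ζ N) (P : ℤ[X])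
    (hyp : ∀ θ : ℂ, θ ^ n = 1 → θ ^ (n / p) ≠ 1 →
      ∃ G : ℤ[X], aeval θ P = (p : ℂ) * aeval ζ G) :
    ((X : (ZMod p)[X]) ^ (ordCompl[p] n) - 1) ^
        (p ^ (n.factorization p) - p ^ (n.factorization p - 1)) ∣
      P.map (Int.castRingHom (ZMod p)) := by
  haveI : Fact p.Prime := ⟨hp⟩
  set α := n.factorization p with hα_def
  set u := ordCompl[p] n with hu_def
  have hα : 1 ≤ α := hp.factorization_pos_of_dvd hn.ne' hpn
  have hn_eq : p ^ α * u = n := Nat.ordProj_mul_ordCompl_eq_self n p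
  have hu : ¬ p ∣ u := Nat.not_dvd_ordCompl hp hn.ne'
  have hu0 : 0 < u := Nat.ordCompl_pos p hn.ne'
  set β := N.factorization p with hβ_def
  set w := ordCompl[p] N with hw_def
  have hβα : α ≤ β := by
    have h := (Nat.factorization_le_iff_dvd hn.ne' hN.ne').mpr hnN
    exact h p
  have hβ : 1 ≤ β := le_trans hα hβα
  have hN_eq : p ^ β * w = N := Nat.ordProj_mul_ordCompl_eq_self N p
  have hpw : ¬ p ∣ w := Nat.not_dvd_ordCompl hp hN.ne'
  have hw0 : 0 < w := Nat.ordCompl_pos p hN.ne'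
  have hud : u ∣ w := Nat.ordCompl_dvd_ordCompl_of_dvd hnN p
  set E := p ^ α - p ^ (α - 1) with hE_def
  set PM := P.map (Int.castRingHom (ZMod p)) with hPM_def
  by_cases hPM0 : PM = 0
  · rw [hPM0]; exact dvd_zero _
  set K := AlgebraicClosure (ZMod p) with hK_def
  haveI : CharP K p := charP_of_injective_algebraMap (algebraMap (ZMod p) K).injective p
  haveI hwK : NeZero (w : K) := ⟨fun h => hpw ((CharP.cast_eq_zero_iff K p w).mp h)⟩
  haveI huK : NeZero (u : K) := ⟨fun h => hu ((CharP.cast_eq_zero_iff K p u).mp h)⟩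
  obtain ⟨ξ₀, hξ₀root⟩ : ∃ x : K, IsRoot (cyclotomic w K) x := by
    apply IsAlgClosed.exists_root
    rw [degree_cyclotomic]
    exact_mod_cast (Nat.totient_pos.mpr hw0).ne'
  have hξ₀ : IsPrimitiveRoot ξ₀ w := isRoot_cyclotomic_iff.mp hξ₀root
  have hξ₀ne : ξ₀ ≠ 0 := hξ₀.ne_zero hw0.ne'
  set PK := PM.map (algebraMap (ZMod p) K) with hPK_def
  have hPK0 : PK ≠ 0 := Polynomial.map_ne_zero hPM0
  -- pointwise divisibility at each u-th root of unity in K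
  have main : ∀ r ∈ nthRootsFinset u (1 : K), (X - C r) ^ E ∣ PK := by
    intro r hr
    have hru : r ^ u = 1 := (Polynomial.mem_nthRootsFinset hu0 1).mp hr
    set d := orderOf r with hd_def
    have hfo : IsOfFinOrder r := isOfFinOrder_iff_pow_eq_one.mpr ⟨u, hu0, hru⟩
    have hd0 : 0 < d := hfo.orderOf_pos
    have hddvd : d ∣ u := orderOf_dvd_of_pow_eq_one hru
    have hdw : d ∣ w := hddvd.trans hud
    set η := ξ₀ ^ (w / d) with hη_def
    have hη : IsPrimitiveRoot η d :=
      IsPrimitiveRoot.pow hw0 hξ₀ (Nat.div_mul_cancel hdw).symm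
    haveI : NeZero d := ⟨hd0.ne'⟩
    obtain ⟨i, hi_lt, hi⟩ := hη.eq_pow_of_pow_eq_one (pow_orderOf_eq_one r)
    have hgcd : Nat.gcd d i = 1 := by
      rcases Nat.eq_zero_or_pos i with rfl | hi0
      · have : r = 1 := by rw [← hi, pow_zero]
        have hd1 : d = 1 := by rw [hd_def, this, orderOf_one]
        simp [hd1]
      have h1 : orderOf (η ^ i) = d := by rw [hi]
      rw [orderOf_pow' _ hi0.ne', ← hη.eq_orderOf] at h1
      rcases Nat.div_eq_self.mp h1 with h | h
      · omega
      · exact h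
    set s₁ := if p ∣ i then i + d else i with hs₁_def
    have hps₁ : ¬ p ∣ s₁ := by
      by_cases hpi : p ∣ i
      · simp only [hs₁_def, if_pos hpi]
        intro hcon
        exact hu (dvd_trans ((Nat.dvd_add_right hpi).mp hcon) hddvd)
      · simpa [hs₁_def, if_neg hpi] using hpi
    have hs₁0 : 0 < s₁ := by
      by_cases hpi : p ∣ i
      · simp only [hs₁_def, if_pos hpi]; omega
      · simp only [hs₁_def, if_neg hpi]
        rcases Nat.eq_zero_or_pos i with rfl | h
        · exact absurd (dvd_zero p) hpi
        · exact h
    have hηs₁ : η ^ s₁ = r := by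
      by_cases hpi : p ∣ i
      · simp only [hs₁_def, if_pos hpi]
        rw [pow_add, hη.pow_eq_one, mul_one, hi]
      · simp only [hs₁_def, if_neg hpi]; exact hi
    set t := (w / d) * s₁ with ht_def
    have hwd_dvd : (w / d) ∣ w := Nat.div_dvd_of_dvd hdw
    have hpt : ¬ p ∣ t := by
      intro h
      rcases (Nat.Prime.dvd_mul hp).mp h with h | h
      · exact hpw (h.trans hwd_dvd)
      · exact hps₁ h
    have ht0 : 0 < t :=
      Nat.mul_pos (Nat.div_pos (Nat.le_of_dvd hw0 hdw) hd0) hs₁0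
    set k := p ^ (β - α) * t with hk_def
    set θ := ζ ^ k with hθ_def
    have h1 : (w / d) * d = w := Nat.div_mul_cancel hdw
    have h2 : d * (u / d) = u := Nat.mul_div_cancel' hddvd
    have h3 : p ^ (β - α) * p ^ α = p ^ β := by rw [← pow_add]; congr 1; omega
    have h4 : (w / d) * u = w * (u / d) := by
      calc (w / d) * u = (w / d) * (d * (u / d)) := by rw [h2]
        _ = ((w / d) * d) * (u / d) := by ring
        _ = w * (u / d) := by rw [h1]
    have hθn : θ ^ n = 1 := by
      rw [hθ_def, ← pow_mul, hζ.pow_eq_one_iff_dvd]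
      refine ⟨(u / d) * s₁, ?_⟩
      rw [← hn_eq, ← hN_eq]
      calc (p ^ (β - α) * ((w / d) * s₁)) * (p ^ α * u)
          = (p ^ (β - α) * p ^ α) * ((w / d) * u) * s₁ := by ring
        _ = p ^ β * (w * (u / d)) * s₁ := by rw [h3, h4]
        _ = p ^ β * w * ((u / d) * s₁) := by ring
    have hθnp : θ ^ (n / p) ≠ 1 := by
      rw [hθ_def, ← pow_mul]
      intro hdvd2'
      rw [hζ.pow_eq_one_iff_dvd] at hdvd2'
      have hdvd2 := hdvd2'
      have hnp : n / p = p ^ (α - 1) * u := by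
        rw [← hn_eq]
        have hmm : p ^ α * u = p * (p ^ (α - 1) * u) := by
          rw [← mul_assoc]
          congr 1
          rw [← pow_succ']
          congr 1
          omega
        rw [hmm, Nat.mul_div_cancel_left _ hp.pos]
      have h5 : p ^ (β - α) * p ^ (α - 1) = p ^ (β - 1) := by
        rw [← pow_add]; congr 1; omega
      have hkk : k * (n / p) = p ^ (β - 1) * ((w / d) * u * s₁) := by
        rw [hnp, hk_def, ht_def]
        calc (p ^ (β - α) * ((w / d) * s₁)) * (p ^ (α - 1) * u)
            = (p ^ (β - α) * p ^ (α - 1)) * ((w / d) * u * s₁) := by ring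
          _ = p ^ (β - 1) * ((w / d) * u * s₁) := by rw [h5]
      rw [hkk, ← hN_eq] at hdvd2
      have hdvd3 : p ^ β ∣ p ^ (β - 1) * ((w / d) * u * s₁) :=
        dvd_trans (Dvd.intro w rfl) hdvd2
      have hβsplit : p ^ β = p ^ (β - 1) * p := by rw [← pow_succ]; congr 1; omega
      rw [hβsplit] at hdvd3
      have hdvd4 : p ∣ (w / d) * u * s₁ :=
        (Nat.mul_dvd_mul_iff_left (Nat.pow_pos hp.pos : 0 < p ^ (β - 1))).mp hdvd3
      rcases (Nat.Prime.dvd_mul hp).mp hdvd4 with h | h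
      · rcases (Nat.Prime.dvd_mul hp).mp h with h' | h'
        · exact hpw (h'.trans hwd_dvd)
        · exact hu h'
      · exact hps₁ h
    obtain ⟨G, hG⟩ := hyp θ hθn hθnp
    have haeq : aeval ζ (expand ℤ k P - C (p : ℤ) * G) = 0 := by
      rw [map_sub, expand_aeval, map_mul, aeval_C]
      rw [← hθ_def, hG]
      push_cast
      ring
    have hdvd_int : cyclotomic N ℤ ∣ expand ℤ k P - C (p : ℤ) * G := by
      rw [cyclotomic_eq_minpoly hζ hN]
      exact minpoly.isIntegrallyClosed_dvd (hζ.isIntegral hN) haeq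
    have hdvd_zmod : cyclotomic N (ZMod p) ∣ expand (ZMod p) k PM := by
      have hmap := map_dvd (Polynomial.mapRingHom (Int.castRingHom (ZMod p))) hdvd_int
      simp only [Polynomial.coe_mapRingHom, Polynomial.map_sub, Polynomial.map_mul,
        map_cyclotomic, map_expand, Polynomial.map_C, eq_intCast, Int.cast_natCast, Polynomial.map_natCast, CharP.cast_eq_zero, ZMod.natCast_self,
        map_zero, zero_mul, sub_zero] at hmap
      exact hmap
    have hpow : expand (ZMod p) k PM = (expand (ZMod p) t PM) ^ (p ^ (β - α)) := by
      rw [hk_def, ← expand_expand, expand_pow_zmod']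
    have hKdvd : (cyclotomic w K) ^ (p ^ β - p ^ (β - 1)) ∣ (expand K t PK) ^ (p ^ (β - α)) := by
      have hmap := map_dvd (Polynomial.mapRingHom (algebraMap (ZMod p) K))
        (hpow ▸ hdvd_zmod)
      simp only [Polynomial.coe_mapRingHom, Polynomial.map_pow, map_expand,
        map_cyclotomic] at hmap
      rw [show N = p ^ β * w from hN_eq.symm] at hmap
      rw [cyclotomic_mul_prime_pow_eq K hpw hβ] at hmap
      exact hmap
    have hexpne : expand K t PK ≠ 0 := by
      intro h0
      exact hPK0 (expand_injective ht0 (by simpa using h0))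
    have hXdvd : (X - C ξ₀) ^ (p ^ β - p ^ (β - 1)) ∣ (expand K t PK) ^ (p ^ (β - α)) :=
      dvd_trans (pow_dvd_pow_of_dvd (dvd_iff_isRoot.mpr hξ₀root) _) hKdvd
    have hEle : E ≤ rootMultiplicity ξ₀ (expand K t PK) := by
      have h6 : p ^ β - p ^ (β - 1)
          ≤ rootMultiplicity ξ₀ ((expand K t PK) ^ (p ^ (β - α))) :=
        (le_rootMultiplicity_iff (pow_ne_zero _ hexpne)).mpr hXdvd
      rw [rootMultiplicity_pow hexpne, pow_sub_pow_factor_eq hp.one_lt hα hβα] at h6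
      exact Nat.le_of_mul_le_mul_left h6 (Nat.pow_pos hp.pos)
    have step := dvd_of_expand_dvd p hp t E hpt ht0 ξ₀ hξ₀ne PK hPK0
      ((le_rootMultiplicity_iff hexpne).mp hEle)
    have hξt : ξ₀ ^ t = r := by
      rw [ht_def, pow_mul, ← hη_def, hηs₁]
    rw [hξt] at step
    exact step
  -- assemble the product
  have hprod : (∏ r ∈ nthRootsFinset u (1 : K), (X - C r) ^ E) ∣ PK := by
    apply Finset.prod_dvd_of_coprime
    · intro a _ b _ hab
      exact (Polynomial.pairwise_coprime_X_sub_C (Function.injective_id) hab).pow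
    · exact fun r hr => main r hr
  have hξu : IsPrimitiveRoot (ξ₀ ^ (w / u)) u :=
    IsPrimitiveRoot.pow hw0 hξ₀ (Nat.div_mul_cancel hud).symm
  have hXu : (X ^ u - 1 : K[X]) = ∏ r ∈ nthRootsFinset u (1 : K), (X - C r) :=
    X_pow_sub_one_eq_prod hu0 hξu
  have hfin : ((X ^ u - 1 : K[X])) ^ E ∣ PK := by
    rw [hXu, ← Finset.prod_pow]; exact hprod
  -- descend from K to ZMod p
  have hmonic : ((X : (ZMod p)[X]) ^ u - 1).Monic := by
    simpa using monic_X_pow_sub_C (1 : ZMod p) hu0.ne'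
  have hmonicE : (((X : (ZMod p)[X]) ^ u - 1) ^ E).Monic := hmonic.pow E
  rw [← modByMonic_eq_zero_iff_dvd hmonicE]
  have hmapmod := Polynomial.map_modByMonic (algebraMap (ZMod p) K) hmonicE (p := PM)
  have hmap0 : (PM %ₘ (((X : (ZMod p)[X]) ^ u - 1) ^ E)).map (algebraMap (ZMod p) K) = 0 := by
    rw [hmapmod]
    have hmapg : (((X : (ZMod p)[X]) ^ u - 1) ^ E).map (algebraMap (ZMod p) K)
        = ((X : K[X]) ^ u - 1) ^ E := by
      simp
    rw [hmapg]
    have hmK : ((X : K[X]) ^ u - 1).Monic := by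
      simpa using monic_X_pow_sub_C (1 : K) hu0.ne'
    rw [modByMonic_eq_zero_iff_dvd (hmK.pow E)]
    exact hfin
  have hinj := Polynomial.map_injective (algebraMap (ZMod p) K)
    (algebraMap (ZMod p) K).injective
  apply hinj
  simpa using hmap0


lemma pow_mod_eq {n : ℕ} {θ : ℂ} (hθ : θ ^ n = 1) (a : ℕ) : θ ^ (a % n) = θ ^ a := by
  conv_rhs => rw [← Nat.div_add_mod a n]
  rw [pow_add, pow_mul, hθ, one_pow, one_mul]

lemma X_pow_sub_one_char (p : ℕ) [Fact p.Prime] (m j : ℕ) :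
    (((X : (ZMod p)[X]) ^ m - 1)) ^ (p ^ j) = X ^ (m * p ^ j) - 1 := by
  rw [sub_pow_char_pow, ← pow_mul, one_pow]

lemma lemA (p : ℕ) (hp : p.Prime) (N n : ℕ) [NeZero n] (hN : 0 < N) (hn : 0 < n) (hnN : n ∣ N)
    (hpn : p ∣ n) (ζ : ℂ) (hζ : IsPrimitiveRoot ζ N) (f : ZMod n → ℤ)
    (hyp : ∀ θ : ℂ, θ ^ n = 1 → θ ^ (n / p) ≠ 1 →
      ∃ G : ℤ[X], aeval θ (polyOf n f) = (p : ℂ) * aeval ζ G) :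
    ∀ x : ZMod n, (p : ℤ) ∣ f (x + ((n / p : ℕ) : ZMod n)) - f x := by
  haveI : Fact p.Prime := ⟨hp⟩
  have hcore := core p hp N n hN hn hnN hpn ζ hζ (polyOf n f) hyp
  set α := n.factorization p with hα_def
  set u := ordCompl[p] n with hu_def
  have hα : 1 ≤ α := hp.factorization_pos_of_dvd hn.ne' hpn
  have hn_eq : p ^ α * u = n := Nat.ordProj_mul_ordCompl_eq_self n p
  have hu0 : 0 < u := Nat.ordCompl_pos p hn.ne'
  set FM := (polyOf n f).map (Int.castRingHom (ZMod p)) with hFM_def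
  have hnp_eq : u * p ^ (α - 1) = n / p := by
    have hmm : p ^ α * u = p * (p ^ (α - 1) * u) := by
      rw [← mul_assoc]
      congr 1
      rw [← pow_succ']
      congr 1
      omega
    rw [← hn_eq, hmm, Nat.mul_div_cancel_left _ hp.pos]
    ring
  -- X^n - 1 divides (X^(n/p) - 1) * FM over ZMod p
  have step1 : ((X : (ZMod p)[X]) ^ n - 1) ∣ (X ^ (n / p) - 1) * FM := by
    have hXn : (((X : (ZMod p)[X]) ^ u - 1)) ^ (p ^ α) = X ^ n - 1 := by
      rw [X_pow_sub_one_char, show u * p ^ α = n from by rw [mul_comm]; exact hn_eq]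
    have hXnp : (((X : (ZMod p)[X]) ^ u - 1)) ^ (p ^ (α - 1)) = X ^ (n / p) - 1 := by
      rw [X_pow_sub_one_char, hnp_eq]
    have hsplit : (((X : (ZMod p)[X]) ^ u - 1)) ^ (p ^ α)
        = (((X : (ZMod p)[X]) ^ u - 1)) ^ (p ^ (α - 1))
          * (((X : (ZMod p)[X]) ^ u - 1)) ^ (p ^ α - p ^ (α - 1)) := by
      rw [← pow_add, Nat.add_sub_cancel' (Nat.pow_le_pow_right hp.pos (by omega))]
    rw [← hXn, hsplit, ← hXnp]
    exact mul_dvd_mul_left _ hcore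
  -- unwrap into coefficient congruences
  set δ' := n / p with hδ'_def
  set δ : ZMod n := ((δ' : ℕ) : ZMod n) with hδ_def
  have hδval : δ.val = δ' := by
    rw [hδ_def, ZMod.val_natCast_of_lt (Nat.div_lt_self hn hp.one_lt)]
  set g : ZMod n → ℤ := fun y => f (y - δ) with hg_def
  set GM := (polyOf n g).map (Int.castRingHom (ZMod p)) with hGM_def
  have hsum : ((X : (ZMod p)[X]) ^ n - 1) ∣ GM - X ^ δ' * FM := by
    have hGM : GM = ∑ x : ZMod n, monomial ((x + δ).val) (((f x : ℤ) : ZMod p)) := by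
      rw [hGM_def, polyOf_map]
      rw [← Equiv.sum_comp (Equiv.addRight δ)
        (fun y : ZMod n => (monomial y.val ((g y : ℤ) : ZMod p)))]
      refine Finset.sum_congr rfl fun x _ => ?_
      simp only [Equiv.coe_addRight]
      congr 2
      rw [hg_def]
      simp
    have hXF : X ^ δ' * FM = ∑ x : ZMod n, monomial (x.val + δ') (((f x : ℤ) : ZMod p)) := by
      rw [hFM_def, polyOf_map, Finset.mul_sum]
      refine Finset.sum_congr rfl fun x _ => ?_
      rw [X_pow_eq_monomial, monomial_mul_monomial, one_mul, add_comm]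
    rw [hGM, hXF, ← Finset.sum_sub_distrib]
    refine Finset.dvd_sum fun x _ => ?_
    have hval : (x + δ).val = (x.val + δ') % n := by
      rw [ZMod.val_add, hδval]
    rw [hval, ← C_mul_X_pow_eq_monomial, ← C_mul_X_pow_eq_monomial, ← mul_sub]
    refine Dvd.dvd.mul_left ?_ _
    have h2 := dvd_neg.mpr (X_pow_sub_one_dvd_pow_sub_pow_mod (R := ZMod p) n (x.val + δ'))
    simpa [neg_sub] using h2
  have hfinal : ((X : (ZMod p)[X]) ^ n - 1) ∣ GM - FM := by
    have h1 : GM - FM = (GM - X ^ δ' * FM) + (X ^ δ' - 1) * FM := by ring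
    rw [h1]
    exact dvd_add hsum step1
  have hzero : GM - FM = 0 := by
    by_contra hne
    have hdeg := Polynomial.natDegree_le_of_dvd hfinal hne
    have hdegn : ((X : (ZMod p)[X]) ^ n - 1).natDegree = n := by
      simpa using natDegree_X_pow_sub_C (n := n) (r := (1 : ZMod p))
    rw [hdegn] at hdeg
    have hd1 : GM.natDegree < n :=
      lt_of_le_of_lt natDegree_map_le (natDegree_polyOf_lt g)
    have hd2 : FM.natDegree < n :=
      lt_of_le_of_lt natDegree_map_le (natDegree_polyOf_lt f)
    have := Polynomial.natDegree_sub_le GM FM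
    omega
  have hcoeff : ∀ y : ZMod n, ((g y : ℤ) : ZMod p) = ((f y : ℤ) : ZMod p) := by
    intro y
    have h0 : (GM - FM).coeff y.val = 0 := by rw [hzero]; simp
    rw [coeff_sub, hGM_def, hFM_def, coeff_map, coeff_map, coeff_polyOf, coeff_polyOf] at h0
    have := sub_eq_zero.mp h0
    simpa using this
  intro x
  have h := hcoeff (x + δ)
  have hgx : g (x + δ) = f x := by rw [hg_def]; simp
  rw [hgx] at h
  have : ((f x - f (x + δ) : ℤ) : ZMod p) = 0 := by
    push_cast
    rw [h]
    ring
  have hdvd := (ZMod.intCast_zmod_eq_zero_iff_dvd _ p).mp this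
  have := dvd_neg.mpr hdvd
  simpa using this


set_option maxHeartbeats 1000000 in
lemma lemB (N n : ℕ) [NeZero n] (hN : 0 < N) (hn : 0 < n) (hnN : n ∣ N) (h2n : 2 ∣ n)
    (ζ : ℂ) (hζ : IsPrimitiveRoot ζ N) (f : ZMod n → ℤ)
    (hyp : ∀ θ : ℂ, θ ^ n = 1 → θ ≠ 1 →
      ∃ G : ℤ[X], aeval θ (polyOf n f) = 4 * aeval ζ G) :
    ∀ x : ZMod n, (4 : ℤ) ∣ f (x + ((n / 2 : ℕ) : ZMod n)) - f x := by
  have h2 : ∀ x : ZMod n, (2 : ℤ) ∣ f (x + ((n / 2 : ℕ) : ZMod n)) - f x := by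
    apply lemA 2 Nat.prime_two N n hN hn hnN h2n ζ hζ f
    intro θ hθn hθnp
    have hθ1 : θ ≠ 1 := fun h => hθnp (by rw [h, one_pow])
    obtain ⟨G, hG⟩ := hyp θ hθn hθ1
    refine ⟨C 2 * G, ?_⟩
    rw [hG, map_mul, aeval_C, eq_intCast]
    push_cast
    ring
  set δ' := n / 2 with hδ'_def
  set δ : ZMod n := ((δ' : ℕ) : ZMod n) with hδ_def
  have hδ'pos : 0 < δ' := Nat.div_pos (Nat.le_of_dvd hn h2n) two_pos
  have hδ'lt : δ' < n := Nat.div_lt_self hn one_lt_two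
  have hδval : δ.val = δ' := ZMod.val_natCast_of_lt hδ'lt
  have hδ2 : δ' + δ' = n := by
    have := Nat.div_mul_cancel h2n
    omega
  set e : ZMod n → ℤ := fun x => (f (x + δ) - f x) / 2 with he_def
  have he : ∀ x, 2 * e x = f (x + δ) - f x := fun x => Int.mul_ediv_cancel' (h2 x)
  set Ep := polyOf n e with hEp_def
  have claim1 : ∀ θ : ℂ, θ ^ n = 1 →
      2 * aeval θ Ep = (θ ^ δ' - 1) * aeval θ (polyOf n f) := by
    intro θ hθ
    have hhalf : θ ^ δ' * θ ^ δ' = 1 := by rw [← pow_add, hδ2, hθ]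
    have hval : ∀ x : ZMod n, θ ^ ((x + δ).val) = θ ^ x.val * θ ^ δ' := by
      intro x
      rw [ZMod.val_add, hδval, pow_mod_eq hθ, pow_add]
    have hS : θ ^ δ' * (∑ x : ZMod n, (f (x + δ) : ℂ) * θ ^ x.val)
        = ∑ x : ZMod n, (f x : ℂ) * θ ^ x.val := by
      rw [Finset.mul_sum]
      rw [← Equiv.sum_comp (Equiv.addRight δ) (fun y : ZMod n => (f y : ℂ) * θ ^ y.val)]
      refine Finset.sum_congr rfl fun x _ => ?_
      simp only [Equiv.coe_addRight]
      rw [hval x]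
      ring
    have hEval : aeval θ Ep = ∑ x : ZMod n, (e x : ℂ) * θ ^ x.val := aeval_polyOf e θ
    have hFval : aeval θ (polyOf n f) = ∑ x : ZMod n, (f x : ℂ) * θ ^ x.val := aeval_polyOf f θ
    have hS2 : (∑ x : ZMod n, (f (x + δ) : ℂ) * θ ^ x.val)
        = θ ^ δ' * ∑ x : ZMod n, (f x : ℂ) * θ ^ x.val := by
      calc (∑ x : ZMod n, (f (x + δ) : ℂ) * θ ^ x.val)
          = (θ ^ δ' * θ ^ δ') * (∑ x : ZMod n, (f (x + δ) : ℂ) * θ ^ x.val) := by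
            rw [hhalf, one_mul]
        _ = θ ^ δ' * (θ ^ δ' * (∑ x : ZMod n, (f (x + δ) : ℂ) * θ ^ x.val)) := by ring
        _ = θ ^ δ' * ∑ x : ZMod n, (f x : ℂ) * θ ^ x.val := by rw [hS]
    have hterm : ∀ x : ZMod n, 2 * ((e x : ℂ) * θ ^ x.val)
        = (f (x + δ) : ℂ) * θ ^ x.val - (f x : ℂ) * θ ^ x.val := by
      intro x
      have h' : ((2 * e x : ℤ) : ℂ) = ((f (x + δ) - f x : ℤ) : ℂ) := by rw [he x]
      push_cast at h'
      calc 2 * ((e x : ℂ) * θ ^ x.val) = (2 * (e x : ℂ)) * θ ^ x.val := by ring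
        _ = ((f (x + δ) : ℂ) - (f x : ℂ)) * θ ^ x.val := by rw [h']
        _ = _ := by ring
    rw [hEval, hFval, Finset.mul_sum]
    rw [Finset.sum_congr rfl fun x _ => hterm x, Finset.sum_sub_distrib, hS2]
    ring
  have claim2 : ∀ θ : ℂ, θ ^ δ' = 1 → aeval θ Ep = 0 := by
    intro θ hθroot
    have hθn : θ ^ n = 1 := by rw [← hδ2, pow_add, hθroot, one_mul]
    have h0 : 2 * aeval θ Ep = 0 := by
      rw [claim1 θ hθn, hθroot, sub_self, zero_mul]
    exact (mul_eq_zero.mp h0).resolve_left two_ne_zero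
  have hmonicZ : ((X : ℤ[X]) ^ δ' - 1).Monic := by
    simpa using monic_X_pow_sub_C (1 : ℤ) hδ'pos.ne'
  have hdegq : ((X : ℤ[X]) ^ δ' - 1).natDegree = δ' := by
    simpa using natDegree_X_pow_sub_C (n := δ') (r := (1 : ℤ))
  have hq1 : ((X : ℤ[X]) ^ δ' - 1) ≠ 1 := by
    intro h
    rw [h, natDegree_one] at hdegq
    omega
  set Rp := Ep %ₘ ((X : ℤ[X]) ^ δ' - 1) with hRp_def
  have hRmap : Rp.map (Int.castRingHom ℂ) = 0 := by
    apply eq_zero_of_natDegree_lt_card_of_eval_eq_zero' _ (nthRootsFinset δ' (1 : ℂ))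
    · intro θ hθmem
      have hθroot : θ ^ δ' = 1 := (Polynomial.mem_nthRootsFinset hδ'pos 1).mp hθmem
      have haR : aeval θ Rp = 0 := by
        have hdecomp := modByMonic_add_div Ep ((X : ℤ[X]) ^ δ' - 1)
        have hc := congrArg (aeval θ) hdecomp
        rw [map_add, map_mul] at hc
        have hq0 : aeval θ ((X : ℤ[X]) ^ δ' - 1) = 0 := by
          rw [map_sub, map_pow, aeval_X, map_one, hθroot, sub_self]
        rw [hq0, zero_mul, add_zero] at hc
        rw [hc, claim2 θ hθroot]
      have hcast : (Rp.map (Int.castRingHom ℂ)).eval θ = aeval θ Rp := by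
        rw [aeval_def, eval_map, algebraMap_int_eq]
      rw [hcast]
      exact haR
    · have hcard := (Complex.isPrimitiveRoot_exp δ' hδ'pos.ne').card_nthRootsFinset
      rw [hcard]
      calc (Rp.map (Int.castRingHom ℂ)).natDegree ≤ Rp.natDegree := natDegree_map_le
        _ < ((X : ℤ[X]) ^ δ' - 1).natDegree := natDegree_modByMonic_lt Ep hmonicZ hq1
        _ = δ' := hdegq
  have hR0 : Rp = 0 := by
    have hinj : Function.Injective (Int.castRingHom ℂ) := Int.cast_injective
    apply Polynomial.map_injective _ hinj
    simpa using hRmap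
  set Q := Ep /ₘ ((X : ℤ[X]) ^ δ' - 1) with hQ_def
  have hEQ : ((X : ℤ[X]) ^ δ' - 1) * Q = Ep := by
    have hdecomp := modByMonic_add_div Ep ((X : ℤ[X]) ^ δ' - 1)
    rw [← hRp_def, hR0, zero_add] at hdecomp
    exact hdecomp
  have claim4 : ∀ θ : ℂ, θ ^ n = 1 → θ ^ (n / 2) ≠ 1 →
      ∃ G : ℤ[X], aeval θ Q = ((2 : ℕ) : ℂ) * aeval ζ G := by
    intro θ hθn hθnhalf
    have hsq : θ ^ δ' = -1 := by
      have h1 : θ ^ δ' * θ ^ δ' = 1 := by rw [← pow_add, hδ2, hθn]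
      rcases mul_self_eq_one_iff.mp h1 with h | h
      · exact absurd h hθnhalf
      · exact h
    have hθ1 : θ ≠ 1 := by
      intro h
      apply hθnhalf
      rw [h, one_pow]
    obtain ⟨G, hG⟩ := hyp θ hθn hθ1
    have hEv : aeval θ Ep = (θ ^ δ' - 1) * aeval θ Q := by
      rw [← hEQ, map_mul, map_sub, map_pow, aeval_X, map_one]
    have hc := claim1 θ hθn
    rw [hEv, hsq, hG] at hc
    refine ⟨G, ?_⟩
    push_cast
    linear_combination (-1 / 4 : ℂ) * hc
  have hcore := core 2 Nat.prime_two N n hN hn hnN h2n ζ hζ Q claim4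
  -- assemble : X^n - 1 divides the mod-2 reduction of Ep
  set α := n.factorization 2 with hα_def
  set u := ordCompl[2] n with hu_def
  have hα : 1 ≤ α := Nat.prime_two.factorization_pos_of_dvd hn.ne' h2n
  have hn_eq : 2 ^ α * u = n := Nat.ordProj_mul_ordCompl_eq_self n 2
  have hnp_eq : u * 2 ^ (α - 1) = δ' := by
    have hmm : 2 ^ α * u = 2 * (2 ^ (α - 1) * u) := by
      rw [← mul_assoc]
      congr 1
      rw [← pow_succ']
      congr 1
      omega
    rw [hδ'_def, ← hn_eq, hmm, Nat.mul_div_cancel_left _ two_pos]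
    ring
  set MQ := Q.map (Int.castRingHom (ZMod 2)) with hMQ_def
  set MEp := Ep.map (Int.castRingHom (ZMod 2)) with hMEp_def
  have hprodM : MEp = ((X : (ZMod 2)[X]) ^ δ' - 1) * MQ := by
    rw [hMEp_def, ← hEQ, Polynomial.map_mul, Polynomial.map_sub, Polynomial.map_pow,
      Polynomial.map_X, Polynomial.map_one]
  have hstep : ((X : (ZMod 2)[X]) ^ n - 1) ∣ MEp := by
    have hXn : (((X : (ZMod 2)[X]) ^ u - 1)) ^ (2 ^ α) = X ^ n - 1 := by
      rw [X_pow_sub_one_char, show u * 2 ^ α = n from by rw [mul_comm]; exact hn_eq]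
    have hXnp : (((X : (ZMod 2)[X]) ^ u - 1)) ^ (2 ^ (α - 1)) = X ^ δ' - 1 := by
      rw [X_pow_sub_one_char, hnp_eq]
    have hsplit : (((X : (ZMod 2)[X]) ^ u - 1)) ^ (2 ^ α)
        = (((X : (ZMod 2)[X]) ^ u - 1)) ^ (2 ^ (α - 1))
          * (((X : (ZMod 2)[X]) ^ u - 1)) ^ (2 ^ α - 2 ^ (α - 1)) := by
      rw [← pow_add, Nat.add_sub_cancel' (Nat.pow_le_pow_right two_pos (by omega))]
    rw [hprodM, ← hXn, hsplit, ← hXnp]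
    exact mul_dvd_mul_left _ hcore
  have hMEp0 : MEp = 0 := by
    by_contra hne
    have hdeg := Polynomial.natDegree_le_of_dvd hstep hne
    have hdegn : ((X : (ZMod 2)[X]) ^ n - 1).natDegree = n := by
      simpa using natDegree_X_pow_sub_C (n := n) (r := (1 : ZMod 2))
    rw [hdegn] at hdeg
    have hd1 : MEp.natDegree < n :=
      lt_of_le_of_lt natDegree_map_le (natDegree_polyOf_lt e)
    omega
  have he2 : ∀ y : ZMod n, (2 : ℤ) ∣ e y := by
    intro y
    have h0 : MEp.coeff y.val = 0 := by rw [hMEp0]; simp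
    rw [hMEp_def, coeff_map, coeff_polyOf] at h0
    exact (ZMod.intCast_zmod_eq_zero_iff_dvd _ 2).mp h0
  intro x
  obtain ⟨k, hk⟩ := he2 x
  have := he x
  rw [hk] at this
  refine ⟨k, ?_⟩
  omega


lemma int_eq_zero_of_dvd_of_small {p d : ℤ} (hp : 3 ≤ p) (h : p ∣ d) (h1 : -2 ≤ d)
    (h2 : d ≤ 2) : d = 0 := by
  obtain ⟨k, rfl⟩ := h
  rcases lt_trichotomy k 0 with hk | hk | hk
  · nlinarith
  · rw [hk, mul_zero]
  · nlinarith

lemma iterate_invariance {n : ℕ} (f : ZMod n → ℕ) (m : ℕ)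
    (hstep : ∀ x : ZMod n, f (x + ((m : ℕ) : ZMod n)) = f x) :
    ∀ (k : ℕ) (x : ZMod n), f (x + ((k * m : ℕ) : ZMod n)) = f x := by
  intro k
  induction k with
  | zero => intro x; simp
  | succ k ih =>
      intro x
      have h1 : ((k + 1) * m : ℕ) = (k * m) + m := by ring
      rw [h1, Nat.cast_add, ← add_assoc]
      rw [show x + ((k * m : ℕ) : ZMod n) + ((m : ℕ) : ZMod n)
        = (x + ((k * m : ℕ) : ZMod n)) + ((m : ℕ) : ZMod n) from rfl]
      rw [hstep, ih]

lemma sum_zmod_eq_sum_range {n : ℕ} [NeZero n] (F : ℕ → ℂ) :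
    ∑ x : ZMod n, F x.val = ∑ i ∈ Finset.range n, F i := by
  refine Finset.sum_nbij' (fun x => x.val) (fun i => ((i : ℕ) : ZMod n)) ?_ ?_ ?_ ?_ ?_
  · intro a _
    exact Finset.mem_range.mpr (ZMod.val_lt a)
  · intro i _
    exact Finset.mem_univ _
  · intro a _
    exact ZMod.natCast_rightInverse a
  · intro i hi
    exact ZMod.val_natCast_of_lt (Finset.mem_range.mp hi)
  · intro a _
    rfl


lemma sum_range_mul_split (p n' : ℕ) (hn' : 0 < n') (F : ℕ → ℂ) :
    ∑ i ∈ Finset.range (p * n'), F i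
      = ∑ q ∈ Finset.range p, ∑ r ∈ Finset.range n', F (q * n' + r) := by
  rw [← Finset.sum_product']
  symm
  refine Finset.sum_nbij' (fun qr => qr.1 * n' + qr.2) (fun i => (i / n', i % n')) ?_ ?_ ?_ ?_ ?_
  · intro qr hqr
    rw [Finset.mem_product, Finset.mem_range, Finset.mem_range] at hqr
    rw [Finset.mem_range]
    calc qr.1 * n' + qr.2 < qr.1 * n' + n' := by omega
      _ = (qr.1 + 1) * n' := by ring
      _ ≤ p * n' := Nat.mul_le_mul_right _ (by omega)
  · intro i hi
    rw [Finset.mem_range] at hi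
    rw [Finset.mem_product, Finset.mem_range, Finset.mem_range]
    constructor
    · rw [Nat.div_lt_iff_lt_mul hn']
      omega
    · exact Nat.mod_lt _ hn'
  · intro qr hqr
    rw [Finset.mem_product, Finset.mem_range, Finset.mem_range] at hqr
    have h1 : (qr.1 * n' + qr.2) / n' = qr.1 := by
      rw [add_comm, Nat.add_mul_div_right _ _ hn', Nat.div_eq_of_lt hqr.2, zero_add]
    have h2 : (qr.1 * n' + qr.2) % n' = qr.2 := by
      rw [add_comm, Nat.add_mul_mod_self_right, Nat.mod_eq_of_lt hqr.2]
    simp only [h1, h2]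
  · intro i _
    simp only
    rw [mul_comm (i / n') n']
    exact Nat.div_add_mod i n'
  · intro qr _
    rfl

set_option maxHeartbeats 2000000 in
lemma mainLemma (N : ℕ) (hN : 0 < N) (ζ : ℂ) (hζ : IsPrimitiveRoot ζ N) :
    ∀ s n : ℕ, 0 < n → s ∣ n → n ∣ N → ∀ f : ZMod n → ℕ, (∀ x, f x ≤ 2) →
    (∀ θ : ℂ, θ ^ n = 1 → θ ≠ 1 →
      ∃ G : ℤ[X], (∑ i ∈ Finset.range n, (f ((i : ℕ) : ZMod n) : ℂ) * θ ^ i)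
        = 2 * (s : ℂ) * aeval ζ G) →
    ∀ x : ZMod n, f (x + ((n / s : ℕ) : ZMod n)) = f x := by
  intro s
  induction s using Nat.strong_induction_on with
  | _ s ih =>
  intro n hn hsn hnN f hf2 hyp x
  haveI : NeZero n := ⟨hn.ne'⟩
  rcases Nat.eq_zero_or_pos s with rfl | hs0
  · exact absurd (zero_dvd_iff.mp hsn) hn.ne'
  rcases eq_or_ne s 1 with rfl | hs1
  · rw [Nat.div_one, ZMod.natCast_self, add_zero]
  -- connection between polyOf and range sums
  have hpolyrange : ∀ θ : ℂ, aeval θ (polyOf n (fun x => (f x : ℤ)))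
      = ∑ i ∈ Finset.range n, (f ((i : ℕ) : ZMod n) : ℂ) * θ ^ i := by
    intro θ
    calc aeval θ (polyOf n (fun x => (f x : ℤ)))
        = ∑ x : ZMod n, (((f x : ℤ) : ℂ)) * θ ^ x.val := aeval_polyOf _ θ
      _ = ∑ x : ZMod n, (fun i => (f ((i : ℕ) : ZMod n) : ℂ) * θ ^ i) x.val := by
          refine Finset.sum_congr rfl fun x _ => ?_
          show ((f x : ℤ) : ℂ) * θ ^ x.val = (f ((x.val : ℕ) : ZMod n) : ℂ) * θ ^ x.val
          rw [ZMod.natCast_rightInverse x]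
          push_cast
          ring
      _ = ∑ i ∈ Finset.range n, (f ((i : ℕ) : ZMod n) : ℂ) * θ ^ i :=
          sum_zmod_eq_sum_range (n := n) (F := fun i => (f ((i : ℕ) : ZMod n) : ℂ) * θ ^ i)
  -- s ≥ 2
  set p := s.minFac with hp_def
  have hp : p.Prime := Nat.minFac_prime hs1
  have hps : p ∣ s := Nat.minFac_dvd s
  have hpn : p ∣ n := hps.trans hsn
  set n' := n / p with hn'_def
  set s' := s / p with hs'_def
  have hpn_eq : p * n' = n := Nat.mul_div_cancel' hpn
  have hps_eq : p * s' = s := Nat.mul_div_cancel' hps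
  have hn'0 : 0 < n' := Nat.div_pos (Nat.le_of_dvd hn hpn) hp.pos
  have hs'0 : 0 < s' := Nat.div_pos (Nat.le_of_dvd hs0 hps) hp.pos
  haveI : NeZero n' := ⟨hn'0.ne'⟩
  set m := n / s with hm_def
  have hsm : s * m = n := Nat.mul_div_cancel' hsn
  have hn'_eq : s' * m = n' := by
    have h1 : p * (s' * m) = p * n' := by
      rw [hpn_eq, ← hsm, ← hps_eq]
      ring
    exact Nat.eq_of_mul_eq_mul_left hp.pos h1
  have hm_eq' : n' / s' = m := by
    rw [← hn'_eq, Nat.mul_div_cancel_left _ hs'0]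
  -- step 1 : invariance under n/p
  have step1 : ∀ y : ZMod n, f (y + ((n' : ℕ) : ZMod n)) = f y := by
    intro y
    have hbound : ∀ a b : ZMod n, -2 ≤ (f a : ℤ) - (f b : ℤ) ∧ (f a : ℤ) - (f b : ℤ) ≤ 2 := by
      intro a b
      have h1 := hf2 a
      have h2 := hf2 b
      omega
    by_cases hp2 : p = 2
    · -- p = 2 : use lemB
      have h2s : 2 ∣ s := hp2 ▸ hps
      obtain ⟨s2, hs2⟩ := h2s
      have hdvd4 := lemB N n hN hn hnN (hp2 ▸ hpn) ζ hζ (fun x => (f x : ℤ)) ?_ y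
      · have hd := int_eq_zero_of_dvd_of_small (by norm_num) hdvd4
          (hbound _ _).1 (hbound _ _).2
        have heq : ((n / 2 : ℕ) : ZMod n) = ((n' : ℕ) : ZMod n) := by rw [hn'_def, hp2]
        rw [heq] at hd
        have := sub_eq_zero.mp hd
        exact_mod_cast this
      · intro θ hθn hθ1
        obtain ⟨G, hG⟩ := hyp θ hθn hθ1
        refine ⟨C (s2 : ℤ) * G, ?_⟩
        rw [hpolyrange, hG, map_mul, aeval_C, eq_intCast, hs2]
        push_cast
        ring
    · -- p odd : use lemA
      have hp3 : 3 ≤ p := by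
        have := hp.two_le
        rcases Nat.lt_or_ge p 3 with h | h
        · interval_cases p
          · exact absurd rfl hp2
        · exact h
      have hdvdp := lemA p hp N n hN hn hnN hpn ζ hζ (fun x => (f x : ℤ)) ?_ y
      · have hd := int_eq_zero_of_dvd_of_small (by exact_mod_cast hp3) hdvdp
          (hbound _ _).1 (hbound _ _).2
        have := sub_eq_zero.mp hd
        exact_mod_cast this
      · intro θ hθn hθnp
        have hθ1 : θ ≠ 1 := fun h => hθnp (by rw [h, one_pow])
        obtain ⟨G, hG⟩ := hyp θ hθn hθ1
        refine ⟨C ((2 * s') : ℤ) * G, ?_⟩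
        rw [hpolyrange, hG, map_mul, aeval_C, eq_intCast, ← hps_eq]
        push_cast
        ring
  have step1' := iterate_invariance f n' step1
  -- the function on the quotient
  set f' : ZMod n' → ℕ := fun b => f ((b.val : ℕ) : ZMod n) with hf'_def
  have hn'dvd : n' ∣ n := ⟨p, by rw [← hpn_eq]; ring⟩
  set π : ZMod n →+* ZMod n' := ZMod.castHom hn'dvd (ZMod n') with hπ_def
  have hπval : ∀ a : ZMod n, π a = ((a.val : ℕ) : ZMod n') := by
    intro a
    rw [hπ_def, ZMod.castHom_apply, ← ZMod.natCast_val]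
  have hproj : ∀ a : ZMod n, f' (π a) = f a := by
    intro a
    rw [hπval a, hf'_def]
    simp only
    rw [ZMod.val_natCast]
    have hx : a = ((a.val % n' : ℕ) : ZMod n) + (((a.val / n') * n' : ℕ) : ZMod n) := by
      rw [← Nat.cast_add]
      rw [show a.val % n' + a.val / n' * n' = a.val from Nat.mod_add_div' a.val n']
      exact (ZMod.natCast_rightInverse a).symm
    conv_rhs => rw [hx]
    rw [step1' (a.val / n') _]
  have hf'2 : ∀ b, f' b ≤ 2 := fun b => hf2 _
  -- transfer the character hypothesis to the quotient
  have hyp' : ∀ θ : ℂ, θ ^ n' = 1 → θ ≠ 1 →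
      ∃ G : ℤ[X], (∑ r ∈ Finset.range n', (f' ((r : ℕ) : ZMod n') : ℂ) * θ ^ r)
        = 2 * (s' : ℂ) * aeval ζ G := by
    intro θ hθn' hθ1
    have hθn : θ ^ n = 1 := by
      rw [← hpn_eq, mul_comm, pow_mul, hθn', one_pow]
    obtain ⟨G, hG⟩ := hyp θ hθn hθ1
    have hf'r : ∀ r ∈ Finset.range n', (f' ((r : ℕ) : ZMod n') : ℂ) = (f ((r : ℕ) : ZMod n) : ℂ) := by
      intro r hr
      rw [hf'_def]
      simp only
      rw [ZMod.val_natCast, Nat.mod_eq_of_lt (Finset.mem_range.mp hr)]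
    have hsplit : ∑ i ∈ Finset.range n, (f ((i : ℕ) : ZMod n) : ℂ) * θ ^ i
        = (p : ℂ) * ∑ r ∈ Finset.range n', (f ((r : ℕ) : ZMod n) : ℂ) * θ ^ r := by
      calc ∑ i ∈ Finset.range n, (f ((i : ℕ) : ZMod n) : ℂ) * θ ^ i
          = ∑ i ∈ Finset.range (p * n'), (f ((i : ℕ) : ZMod n) : ℂ) * θ ^ i := by
            rw [hpn_eq]
        _ = ∑ q ∈ Finset.range p, ∑ r ∈ Finset.range n',
              (f ((q * n' + r : ℕ) : ZMod n) : ℂ) * θ ^ (q * n' + r) :=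
            sum_range_mul_split p n' hn'0 _
        _ = ∑ q ∈ Finset.range p, ∑ r ∈ Finset.range n',
              (f ((r : ℕ) : ZMod n) : ℂ) * θ ^ r := by
            refine Finset.sum_congr rfl fun q _ => Finset.sum_congr rfl fun r _ => ?_
            have h1 : ((q * n' + r : ℕ) : ZMod n)
                = ((r : ℕ) : ZMod n) + ((q * n' : ℕ) : ZMod n) := by
              push_cast
              ring
            rw [h1, step1' q]
            rw [pow_add, mul_comm q n', pow_mul, hθn', one_pow, one_mul]
        _ = (p : ℂ) * ∑ r ∈ Finset.range n', (f ((r : ℕ) : ZMod n) : ℂ) * θ ^ r := by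
            rw [Finset.sum_const, Finset.card_range, nsmul_eq_mul]
    have hkey : (p : ℂ) * (∑ r ∈ Finset.range n', (f' ((r : ℕ) : ZMod n') : ℂ) * θ ^ r)
        = (p : ℂ) * (2 * (s' : ℂ) * aeval ζ G) := by
      rw [Finset.sum_congr rfl fun r hr => by rw [hf'r r hr]]
      rw [← hsplit, hG]
      have hsps : (s : ℂ) = (p : ℂ) * (s' : ℂ) := by
        rw [← hps_eq]
        push_cast
        ring
      rw [hsps]
      ring
    have hpne : (p : ℂ) ≠ 0 := by
      exact_mod_cast hp.pos.ne'
    exact ⟨G, mul_left_cancel₀ hpne hkey⟩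
  -- apply the induction hypothesis
  have hs'lt : s' < s := Nat.div_lt_self hs0 hp.one_lt
  have hs'n' : s' ∣ n' := ⟨m, hn'_eq.symm⟩
  have hn'N : n' ∣ N := hn'dvd.trans hnN
  have hIH := ih s' hs'lt n' hn'0 hs'n' hn'N f' hf'2 hyp'
  -- conclude
  have hπm : π (((m : ℕ) : ZMod n)) = ((m : ℕ) : ZMod n') := map_natCast π m
  rw [← hproj (x + ((m : ℕ) : ZMod n)), map_add, hπm]
  have hIHx := hIH (π x)
  rw [hm_eq'] at hIHx
  rw [hIHx]
  exact hproj x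


end StmtAux

open Polynomial StmtAux in
set_option maxHeartbeats 1000000 in
theorem multiset_coset_structure_even (c ν c₁ n : ℕ) (hν : 1 ≤ ν) (hc₁ : Odd c₁)
    (hc : c = 2 ^ ν * c₁) (hdvd : c ∣ 2 * n) (hdvd₁ : c₁ ∣ n) (hn : 0 < n)
    (ζ : ℂ) (hζ : IsPrimitiveRoot ζ n)
    (U : Multiset (ZMod n)) (hU2 : ∀ a : ZMod n, U.count a ≤ 2)
    (hchar : ∀ z : ZMod n, z ≠ 0 →
      ∃ y ∈ Algebra.adjoin ℤ ({ζ} : Set ℂ),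
        (U.map (fun i => ζ ^ (i.val * z.val))).sum = (c : ℂ) * y) :
    ∃ E : Multiset ℕ, (∀ a ∈ E, a < 2 * n / c) ∧ (∀ a : ℕ, E.count a ≤ 2) ∧
      U = E.bind (fun a => (Multiset.range (c / 2)).map
        (fun j => ((a + j * (2 * n / c) : ℕ) : ZMod n))) := by
  haveI : NeZero n := ⟨hn.ne'⟩
  set s := 2 ^ (ν - 1) * c₁ with hs_def
  have hc2s : c = 2 * s := by
    rw [hc, hs_def, ← mul_assoc, ← pow_succ']
    congr 2
    omega
  have hc₁0 : 0 < c₁ := hc₁.pos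
  have hs0 : 0 < s := by positivity
  have hsn : s ∣ n := by
    have h2 : 2 * s ∣ 2 * n := hc2s ▸ hdvd
    exact (mul_dvd_mul_iff_left (two_ne_zero)).mp h2
  set m := n / s with hm_def
  have hsm : s * m = n := Nat.mul_div_cancel' hsn
  have hm0 : 0 < m := Nat.div_pos (Nat.le_of_dvd hn hsn) hs0
  have h2nc : 2 * n / c = m := by
    rw [hc2s, hm_def]
    exact Nat.mul_div_mul_left n s two_pos
  have hc2 : c / 2 = s := by
    rw [hc2s]
    exact Nat.mul_div_cancel_left s two_pos
  set f : ZMod n → ℕ := fun x => U.count x with hf_def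
  have hf2 : ∀ x, f x ≤ 2 := fun x => hU2 x
  -- character hypothesis in the range-sum form
  have hyp : ∀ θ : ℂ, θ ^ n = 1 → θ ≠ 1 →
      ∃ G : ℤ[X], (∑ i ∈ Finset.range n, (f ((i : ℕ) : ZMod n) : ℂ) * θ ^ i)
        = 2 * (s : ℂ) * aeval ζ G := by
    intro θ hθn hθ1
    obtain ⟨j, hj_lt, hj⟩ := hζ.eq_pow_of_pow_eq_one hθn
    set z : ZMod n := ((j : ℕ) : ZMod n) with hz_def
    have hzval : z.val = j := ZMod.val_natCast_of_lt hj_lt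
    have hz0 : z ≠ 0 := by
      intro h
      have hj0 : j = 0 := by rw [← hzval, h, ZMod.val_zero]
      rw [hj0, pow_zero] at hj
      exact hθ1 hj.symm
    obtain ⟨y, hy_mem, hy_eq⟩ := hchar z hz0
    rw [Algebra.adjoin_singleton_eq_range_aeval] at hy_mem
    obtain ⟨G, hG⟩ := hy_mem
    refine ⟨G, ?_⟩
    have hmult : (U.map (fun i => ζ ^ (i.val * z.val))).sum
        = ∑ x : ZMod n, (f x : ℂ) * θ ^ x.val := by
      rw [Finset.sum_multiset_map_count]
      have hterm : ∀ x ∈ U.toFinset, U.count x • (ζ ^ (x.val * z.val))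
          = (f x : ℂ) * θ ^ x.val := by
        intro x _
        rw [nsmul_eq_mul, hf_def]
        congr 1
        rw [← hj, hzval, mul_comm x.val j, pow_mul]
      rw [Finset.sum_congr rfl hterm]
      refine Finset.sum_subset (Finset.subset_univ _) ?_
      intro x _ hx
      rw [hf_def]
      simp only
      rw [Multiset.count_eq_zero.mpr (fun hmem => hx (Multiset.mem_toFinset.mpr hmem))]
      rw [Nat.cast_zero, zero_mul]
    have hrange : ∑ i ∈ Finset.range n, (f ((i : ℕ) : ZMod n) : ℂ) * θ ^ i
        = ∑ x : ZMod n, (f x : ℂ) * θ ^ x.val := by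
      rw [← sum_zmod_eq_sum_range (n := n) (F := fun i => (f ((i : ℕ) : ZMod n) : ℂ) * θ ^ i)]
      refine Finset.sum_congr rfl fun x _ => ?_
      show (f ((x.val : ℕ) : ZMod n) : ℂ) * θ ^ x.val = (f x : ℂ) * θ ^ x.val
      rw [ZMod.natCast_rightInverse x]
    rw [hrange, ← hmult, hy_eq, ← hG, hc2s]
    simp only [AlgHom.toRingHom_eq_coe, RingHom.coe_coe]
    push_cast
    ring
  have KEY := mainLemma n hn ζ hζ s n hn hsn dvd_rfl f hf2 hyp
  have KEY' := iterate_invariance f m (fun x => KEY x)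
  -- construct E
  refine ⟨(Multiset.range m).bind (fun a => Multiset.replicate (U.count ((a : ℕ) : ZMod n)) a),
    ?_, ?_, ?_⟩
  · intro a ha
    rw [Multiset.mem_bind] at ha
    obtain ⟨b, hb, hab⟩ := ha
    rw [Multiset.eq_of_mem_replicate hab]
    rw [h2nc]
    exact Multiset.mem_range.mp hb
  · intro a
    rw [Multiset.count_bind]
    have hsum : ((Multiset.range m).map
        (fun b => Multiset.count a (Multiset.replicate (U.count ((b : ℕ) : ZMod n)) b))).sum
        = ∑ b ∈ Finset.range m, if b = a then U.count ((b : ℕ) : ZMod n) else 0 :=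
      calc ((Multiset.range m).map
          (fun b => Multiset.count a (Multiset.replicate (U.count ((b : ℕ) : ZMod n)) b))).sum
          = ∑ b ∈ Finset.range m,
              Multiset.count a (Multiset.replicate (U.count ((b : ℕ) : ZMod n)) b) := rfl
        _ = ∑ b ∈ Finset.range m, if b = a then U.count ((b : ℕ) : ZMod n) else 0 :=
            Finset.sum_congr rfl fun b _ => Multiset.count_replicate a b _
    rw [hsum]
    rw [Finset.sum_ite_eq' (Finset.range m) a]
    split_ifs with h
    · exact hU2 _
    · exact Nat.zero_le _
  · rw [hc2, h2nc]
    refine Multiset.ext.mpr fun b => ?_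
    set g : ℕ → Multiset (ZMod n) :=
      fun a => (Multiset.range s).map (fun j => ((a + j * m : ℕ) : ZMod n)) with hg_def
    have hbv : b.val < n := ZMod.val_lt b
    set a₀ := b.val % m with ha₀_def
    set j₀ := b.val / m with hj₀_def
    have ha₀m : a₀ < m := Nat.mod_lt _ hm0
    have hj₀s : j₀ < s := by
      rw [hj₀_def, Nat.div_lt_iff_lt_mul hm0]
      have := hsm
      rw [mul_comm s m] at this
      omega
    have ha₀j₀ : a₀ + j₀ * m = b.val := by
      rw [ha₀_def, hj₀_def]
      exact Nat.mod_add_div' b.val m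
    have hb_eq : ((a₀ : ℕ) : ZMod n) + ((j₀ * m : ℕ) : ZMod n) = b := by
      rw [← Nat.cast_add, ha₀j₀]
      exact ZMod.natCast_rightInverse b
    have hcnt_b : U.count b = U.count ((a₀ : ℕ) : ZMod n) := by
      have h := KEY' j₀ ((a₀ : ℕ) : ZMod n)
      rw [hb_eq] at h
      exact h
    have hcond : ∀ a j : ℕ, a < m → j < s →
        ((((a + j * m : ℕ) : ZMod n) = b) ↔ (a = a₀ ∧ j = j₀)) := by
      intro a j ham hjs
      constructor
      · intro hcast
        have hlt : a + j * m < n := by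
          have h1 : (j + 1) * m ≤ s * m := Nat.mul_le_mul_right _ (by omega)
          have h2 : a + j * m < (j + 1) * m := by
            have : (j + 1) * m = j * m + m := by ring
            omega
          omega
        have hv : a + j * m = b.val := by
          have hh := congrArg ZMod.val hcast
          rwa [ZMod.val_natCast_of_lt hlt] at hh
        constructor
        · rw [ha₀_def, ← hv, Nat.add_mul_mod_self_right, Nat.mod_eq_of_lt ham]
        · rw [hj₀_def, ← hv, Nat.add_mul_div_right _ _ hm0, Nat.div_eq_of_lt ham, zero_add]
      · rintro ⟨rfl, rfl⟩
        rw [ha₀j₀]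
        exact ZMod.natCast_rightInverse b
    -- compute the count of b in the big bind
    rw [Multiset.bind_assoc, Multiset.count_bind]
    have hrepl : ∀ a : ℕ,
        Multiset.count b ((Multiset.replicate (U.count ((a : ℕ) : ZMod n)) a).bind g)
          = U.count ((a : ℕ) : ZMod n) * Multiset.count b (g a) := by
      intro a
      rw [Multiset.count_bind, Multiset.map_replicate, Multiset.sum_replicate, smul_eq_mul]
    have hgcount : ∀ a : ℕ, a < m →
        Multiset.count b (g a) = ∑ j ∈ Finset.range s, if a = a₀ ∧ j = j₀ then 1 else 0 := by
      intro a ham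
      rw [hg_def]
      simp only
      rw [Multiset.count_map]
      have hcardf : Multiset.card
            ((Multiset.range s).filter (fun j => b = ((a + j * m : ℕ) : ZMod n)))
          = Finset.card ((Finset.range s).filter (fun j => b = ((a + j * m : ℕ) : ZMod n))) := by
        rw [Finset.card_def, Finset.filter_val]
        rfl
      rw [hcardf, Finset.card_filter]
      refine Finset.sum_congr rfl fun j hj => ?_
      have hiff : (b = ((a + j * m : ℕ) : ZMod n)) ↔ (a = a₀ ∧ j = j₀) := by
        rw [eq_comm]
        exact hcond a j ham (Finset.mem_range.mp hj)
      simp only [hiff]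
    have hmain : ((Multiset.range m).map
          (fun a => Multiset.count b ((Multiset.replicate (U.count ((a : ℕ) : ZMod n)) a).bind g))).sum
        = ∑ a ∈ Finset.range m, U.count ((a : ℕ) : ZMod n) * Multiset.count b (g a) :=
      calc ((Multiset.range m).map
          (fun a => Multiset.count b ((Multiset.replicate (U.count ((a : ℕ) : ZMod n)) a).bind g))).sum
          = ∑ a ∈ Finset.range m,
              Multiset.count b ((Multiset.replicate (U.count ((a : ℕ) : ZMod n)) a).bind g) := rfl
        _ = ∑ a ∈ Finset.range m, U.count ((a : ℕ) : ZMod n) * Multiset.count b (g a) :=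
            Finset.sum_congr rfl fun a _ => hrepl a
    rw [hmain]
    have hstep2 : ∀ a ∈ Finset.range m,
        U.count ((a : ℕ) : ZMod n) * Multiset.count b (g a)
          = if a = a₀ then U.count ((a₀ : ℕ) : ZMod n) else 0 := by
      intro a ha
      have ham := Finset.mem_range.mp ha
      rw [hgcount a ham]
      by_cases haa : a = a₀
      · have hinner : (∑ j ∈ Finset.range s, if a₀ = a₀ ∧ j = j₀ then 1 else 0) = 1 := by
          have hsimp : ∀ j, ((a₀ = a₀ ∧ j = j₀) ↔ (j = j₀)) := fun j => by simp
          calc (∑ j ∈ Finset.range s, if a₀ = a₀ ∧ j = j₀ then 1 else 0)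
              = ∑ j ∈ Finset.range s, (if j = j₀ then 1 else 0) :=
                Finset.sum_congr rfl fun j _ => if_congr (hsimp j) rfl rfl
            _ = 1 := by
                rw [Finset.sum_ite_eq' (Finset.range s) j₀ (fun _ => 1)]
                rw [if_pos (Finset.mem_range.mpr hj₀s)]
        rw [haa, hinner, mul_one, if_pos rfl]
      · have hinner : (∑ j ∈ Finset.range s, if a = a₀ ∧ j = j₀ then 1 else 0) = 0 := by
          refine Finset.sum_eq_zero fun j _ => ?_
          rw [if_neg (fun h => haa h.1)]
        rw [hinner, mul_zero, if_neg haa]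
    rw [Finset.sum_congr rfl hstep2]
    rw [Finset.sum_ite_eq' (Finset.range m) a₀ (fun _ => U.count ((a₀ : ℕ) : ZMod n))]
    rw [if_pos (Finset.mem_range.mpr ha₀m)]
    exact hcnt_b
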